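/- Let Ω have PMF π_ω = ξ(1-ξ)^{β_ω} p_B(α_ω+1) on ℕ with ξ ∈ (0,1), p_B(b) = ρ(1-ρ)^{b-1}/(1-(1-ρ)^m). Then for any integer θ' ≥ 0, P(Ω > θ') = ξ(1-ξ)^{β_{θ'}} · ((1-ρ)^{1+α_{θ'}} - (1-ρ)^m)/(1-(1-ρ)^m) + (1-ξ)^{1+β_{θ'}}, where α_{θ'} = θ' mod m, β_{θ'} = ⌊θ'/m⌋. -/

import Mathlib

/-- Tail probability of the IRSA stationary age offset distribution. -/
theorem irsa_tail_probability (ρ : ℝ) (m : ℕ) (hρ0 : 0 < ρ) (hρ1 : ρ < 1) (hm : 1 ≤ m)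
    (ξ : ℝ) (hξ0 : 0 < ξ) (hξ1 : ξ < 1)
    (pB : ℕ → ℝ) (hpB : ∀ b, pB b = ρ * (1 - ρ) ^ (b - 1) / (1 - (1 - ρ) ^ m))
    (π : ℕ → ℝ) (hπ : ∀ ω, π ω = ξ * (1 - ξ) ^ (ω / m) * pB (ω % m + 1))
    (θ' : ℕ) :
    (∑' ω : ℕ, if θ' < ω then π ω else 0)
      = ξ * (1 - ξ) ^ (θ' / m)
          * ((1 - ρ) ^ (1 + θ' % m) - (1 - ρ) ^ m) / (1 - (1 - ρ) ^ m)
        + (1 - ξ) ^ (1 + θ' / m) := by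
  haveI : NeZero m := ⟨by omega⟩
  have h1ρ0 : (0:ℝ) ≤ 1 - ρ := by linarith
  have h1ρ1 : (1:ℝ) - ρ < 1 := by linarith
  have h1ξ0 : (0:ℝ) ≤ 1 - ξ := by linarith
  have h1ξ1 : (1:ℝ) - ξ < 1 := by linarith
  have hD : 0 < 1 - (1 - ρ) ^ m := by
    have := pow_lt_one₀ h1ρ0 h1ρ1 (by omega : m ≠ 0)
    linarith
  have hDne : (1 - (1 - ρ) ^ m) ≠ 0 := ne_of_gt hD
  have hπeq : ∀ ω, π ω =
      (ξ * (1 - ξ) ^ (ω / m)) * (ρ * (1 - ρ) ^ (ω % m) / (1 - (1 - ρ) ^ m)) := by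
    intro ω
    rw [hπ, hpB]
    simp only [Nat.add_sub_cancel]
  have hπnn : ∀ ω, 0 ≤ π ω := by
    intro ω
    rw [hπeq]
    positivity
  -- summability of π via the div/mod equivalence
  have hfg : ∀ p : ℕ × Fin m, π ((Nat.divModEquiv m).symm p)
      = (ξ * (1 - ξ) ^ p.1) * (ρ * (1 - ρ) ^ (p.2 : ℕ) / (1 - (1 - ρ) ^ m)) := by
    rintro ⟨q, r⟩
    have h1 : (q * m + (r : ℕ)) / m = q := by
      rw [add_comm, Nat.add_mul_div_right _ _ (by omega : 0 < m),
        Nat.div_eq_of_lt r.is_lt, Nat.zero_add]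
    have h2 : (q * m + (r : ℕ)) % m = (r : ℕ) := by
      rw [add_comm, Nat.add_mul_mod_self_right, Nat.mod_eq_of_lt r.is_lt]
    simp only [Nat.divModEquiv, Equiv.coe_fn_symm_mk]
    rw [hπeq, h1, h2]
  have hsumprod : Summable (fun p : ℕ × Fin m =>
      (ξ * (1 - ξ) ^ p.1) * (ρ * (1 - ρ) ^ (p.2 : ℕ) / (1 - (1 - ρ) ^ m))) := by
    exact Summable.mul_of_nonneg (f := fun q : ℕ => ξ * (1 - ξ) ^ q)
      (g := fun r : Fin m => ρ * (1 - ρ) ^ (r : ℕ) / (1 - (1 - ρ) ^ m))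
      ((summable_geometric_of_lt_one h1ξ0 h1ξ1).mul_left ξ)
      (summable_of_finite_support (Set.toFinite _))
      (fun q => by positivity) (fun r => by positivity)
  have hsumπ : Summable π := by
    rw [← (Nat.divModEquiv m).symm.summable_iff]
    exact hsumprod.congr (fun p => (hfg p).symm)
  -- total sum is 1
  have htotal : ∑' ω, π ω = 1 := by
    rw [← (Nat.divModEquiv m).symm.tsum_eq π, tsum_congr hfg, Summable.tsum_prod' hsumprod (fun b => summable_of_finite_support (Set.toFinite _))]
    have hinner : ∀ q : ℕ, (∑' r : Fin m,
        (ξ * (1 - ξ) ^ q) * (ρ * (1 - ρ) ^ (r : ℕ) / (1 - (1 - ρ) ^ m)))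
        = ξ * (1 - ξ) ^ q := by
      intro q
      rw [tsum_fintype, ← Finset.mul_sum, ← Finset.sum_div, ← Finset.mul_sum,
        Fin.sum_univ_eq_sum_range (fun i => (1 - ρ) ^ i),
        geom_sum_eq (by intro h; linarith : (1:ℝ) - ρ ≠ 1)]
      field_simp [hρ0.ne']
      ring
    rw [tsum_congr hinner]
    have := (hasSum_geometric_of_lt_one h1ξ0 h1ξ1).mul_left ξ
    rw [this.tsum_eq, sub_sub_cancel]
    field_simp
  -- tail recursion setup
  set T : ℕ → ℝ := fun n => ∑' ω : ℕ, if n < ω then π ω else 0 with hT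
  have hsumT : ∀ n : ℕ, Summable (fun ω => if n < ω then π ω else 0) := by
    intro n
    apply Summable.of_nonneg_of_le _ _ hsumπ
    · intro ω; by_cases h : n < ω <;> simp [h, hπnn ω]
    · intro ω; by_cases h : n < ω <;> simp [h, hπnn ω]
  have hstep : ∀ n : ℕ, T n = T (n + 1) + π (n + 1) := by
    intro n
    have key : ∀ ω : ℕ, (if n < ω then π ω else 0)
        = (if n + 1 < ω then π ω else 0) + (if ω = n + 1 then π (n + 1) else 0) := by
      intro ω
      rcases lt_trichotomy ω (n+1) with h | h | h
      · rw [if_neg (by omega), if_neg (by omega), if_neg (by omega)]; ring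
      · subst h; rw [if_pos (by omega), if_neg (by omega), if_pos rfl]; ring
      · rw [if_pos (by omega), if_pos h, if_neg (by omega)]; ring
    calc T n = ∑' ω, ((if n + 1 < ω then π ω else 0) + (if ω = n + 1 then π (n + 1) else 0)) :=
          tsum_congr key
      _ = T (n+1) + π (n+1) := by
          rw [Summable.tsum_add (hsumT (n+1)) ((hasSum_ite_eq (n+1) (π (n+1))).summable)]
          rw [tsum_ite_eq]
  have hbase : T 0 = 1 - π 0 := by
    have key : ∀ ω : ℕ, π ω = (if 0 < ω then π ω else 0) + (if ω = 0 then π 0 else 0) := by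
      intro ω
      rcases Nat.eq_zero_or_pos ω with h | h
      · subst h; simp
      · rw [if_pos h, if_neg (by omega)]; ring
    have : (1:ℝ) = T 0 + π 0 := by
      rw [← htotal, tsum_congr key,
        Summable.tsum_add (hsumT 0) ((hasSum_ite_eq 0 (π 0)).summable), tsum_ite_eq]
    linarith
  -- now induction
  induction θ' with
  | zero =>
    show T 0 = _
    rw [hbase, hπeq]
    simp only [Nat.zero_div, Nat.zero_mod, pow_zero, pow_one]
    field_simp
    ring
  | succ n ih =>
    show T (n + 1) = _
    have hTn1 : T (n + 1) = T n - π (n + 1) := by rw [hstep n]; ring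
    have ihT : T n = ξ * (1 - ξ) ^ (n / m)
          * ((1 - ρ) ^ (1 + n % m) - (1 - ρ) ^ m) / (1 - (1 - ρ) ^ m)
        + (1 - ξ) ^ (1 + n / m) := ih
    rw [hTn1, ihT, hπeq]
    rcases Nat.lt_or_ge (n % m + 1) m with hcase | hcase
    · have h1 : (n + 1) / m = n / m := by
        conv_lhs => rw [← Nat.div_add_mod n m]
        rw [add_assoc, Nat.mul_add_div (by omega : 0 < m), Nat.div_eq_of_lt hcase, add_zero]
      have h2 : (n + 1) % m = n % m + 1 := by
        conv_lhs => rw [← Nat.div_add_mod n m]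
        rw [add_assoc, Nat.mul_add_mod, Nat.mod_eq_of_lt hcase]
      rw [h1, h2]
      field_simp
      ring
    · have hrm : n % m + 1 = m := by have := Nat.mod_lt n (show 0 < m by omega); omega
      have h1 : (n + 1) / m = n / m + 1 := by
        conv_lhs => rw [← Nat.div_add_mod n m, add_assoc, hrm, ← Nat.mul_succ]
        exact Nat.mul_div_cancel_left _ (by omega)
      have h2 : (n + 1) % m = 0 := by
        conv_lhs => rw [← Nat.div_add_mod n m, add_assoc, hrm, ← Nat.mul_succ]
        exact Nat.mul_mod_right m _
      rw [h1, h2, show 1 + n % m = m from by omega]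
      field_simp
      ring
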